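/- Let p be an odd prime, H the Heisenberg group of order p³, and α ∈ ℤ/pℤ. Then γ(g) := ι(g^α) is a gamma function on H, and the associated circle operation is g ∘ h = g · h · [g,h]^α. -/

import Mathlib

/-- The Heisenberg group of order `p³`,
`H = ⟨u, v, k : uᵖ = vᵖ = kᵖ = 1, [u,v] = k, [u,k] = [v,k] = 1⟩`,
modelled on triples `⟨i, j, q⟩` representing the normal form `uⁱ vʲ k^q`. -/
@[ext] structure Heis (p : ℕ) where
  x : ZMod p
  y : ZMod p
  z : ZMod p

namespace Heis

variable {p : ℕ}

instance : Mul (Heis p) := ⟨fun a b => ⟨a.x + b.x, a.y + b.y, a.z + b.z - a.y * b.x⟩⟩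
instance : One (Heis p) := ⟨⟨0, 0, 0⟩⟩
instance : Inv (Heis p) := ⟨fun a => ⟨-a.x, -a.y, -a.z - a.y * a.x⟩⟩

lemma mul_def (a b : Heis p) :
    a * b = ⟨a.x + b.x, a.y + b.y, a.z + b.z - a.y * b.x⟩ := rfl
lemma one_def : (1 : Heis p) = ⟨0, 0, 0⟩ := rfl
lemma inv_def (a : Heis p) : a⁻¹ = ⟨-a.x, -a.y, -a.z - a.y * a.x⟩ := rfl

instance : Group (Heis p) where
  mul_assoc a b c := by ext <;> simp [mul_def] <;> ring
  one_mul a := by ext <;> simp [mul_def, one_def]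
  mul_one a := by ext <;> simp [mul_def, one_def]
  inv_mul_cancel a := by ext <;> simp [mul_def, one_def, inv_def] <;> ring

/-- The generator `u`. -/
def u : Heis p := ⟨1, 0, 0⟩
/-- The generator `v`. -/
def v : Heis p := ⟨0, 1, 0⟩
/-- The generator `k = [u, v]`. -/
def k : Heis p := ⟨0, 0, 1⟩

end Heis

/-- A gamma function on a group `G`: `γ(g·γ(g)(h)) = γ(g)γ(h)`. -/
def IsGamma {G : Type*} [Group G] (γ : G → MulAut G) : Prop :=
  ∀ g h : G, γ (g * γ g h) = γ g * γ h

open scoped commutatorElement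

namespace Heis

variable {p : ℕ}

lemma conj_apply (a h : Heis p) :
    MulAut.conj a h = ⟨h.x, h.y, h.z + a.x * h.y - a.y * h.x⟩ := by
  show a * h * a⁻¹ = _
  ext <;> simp [mul_def, inv_def] <;> ring

lemma pow_x (a : Heis p) (n : ℕ) : (a ^ n).x = n * a.x := by
  induction n with
  | zero => simp [one_def]
  | succ n ih => rw [pow_succ]; show (a ^ n).x + a.x = _; rw [ih]; push_cast; ring

lemma pow_y (a : Heis p) (n : ℕ) : (a ^ n).y = n * a.y := by
  induction n with
  | zero => simp [one_def]
  | succ n ih => rw [pow_succ]; show (a ^ n).y + a.y = _; rw [ih]; push_cast; ring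

lemma conj_eq (a b : Heis p) (hx : a.x = b.x) (hy : a.y = b.y) :
    MulAut.conj a = MulAut.conj b := by
  ext h <;> rw [conj_apply, conj_apply, hx, hy]

lemma central_pow (z : ZMod p) (n : ℕ) :
    (⟨0, 0, z⟩ : Heis p) ^ n = ⟨0, 0, n * z⟩ := by
  induction n with
  | zero => simp [one_def]
  | succ n ih => rw [pow_succ, ih]; ext <;> simp [mul_def] <;> push_cast <;> ring

lemma comm_eq (g h : Heis p) : ⁅g, h⁆ = (⟨0, 0, g.x * h.y - g.y * h.x⟩ : Heis p) := by
  show g * h * g⁻¹ * h⁻¹ = _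
  ext <;> simp [mul_def, inv_def] <;> ring

end Heis

/-- For `p` an odd prime, `H` the Heisenberg group of order `p³` and
`α ∈ ℤ/pℤ`, the map `γ(g) := ι(g^α)` is a gamma function on `H`, and the
associated circle operation is `g ∘ h = g·h·[g,h]^α`. -/
theorem stmt16 (p : ℕ) (hp : p.Prime) (hodd : Odd p) (α : ZMod p) :
    IsGamma (fun g : Heis p => MulAut.conj (g ^ α.val)) ∧
    ∀ g h : Heis p, g * (MulAut.conj (g ^ α.val)) h = g * h * ⁅g, h⁆ ^ α.val := by
  set n := α.val with hn
  have circle : ∀ g h : Heis p,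
      g * (MulAut.conj (g ^ n)) h = g * h * ⁅g, h⁆ ^ n := by
    intro g h
    rw [Heis.comm_eq, Heis.central_pow, Heis.conj_apply, Heis.pow_x, Heis.pow_y]
    ext <;> simp [Heis.mul_def] <;> ring
  refine ⟨fun g h => ?_, circle⟩
  simp only
  rw [circle g h, ← map_mul]
  apply Heis.conj_eq <;>
    rw [Heis.comm_eq, Heis.central_pow] <;>
    simp [Heis.pow_x, Heis.pow_y, Heis.mul_def] <;> ring
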